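/- Let (M³, g) be a Riemannian 3-manifold with volume form μ, and let X be a vector field satisfying curl X = f X for a strictly positive function f (a rotational Beltrami field), with X nowhere vanishing. Then the 1-form α = ι_X g satisfies α ∧ dα > 0, i.e. α is a contact form. -/

import Mathlib

/-- We work in a chart `ℝ³` of a Riemannian 3-manifold `(M,g)`. -/
abbrev V3 := Fin 3 → ℝ

/-- The exterior derivative of a 1-form `α` on `ℝ³`, evaluated on constant vector
fields `u, v`: `dα_x(u,v) = ∂_u (α(v)) − ∂_v (α(u))`. -/
noncomputable def extDer (α : V3 → V3 → ℝ) (x u v : V3) : ℝ :=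
  fderiv ℝ (fun y => α y v) x u - fderiv ℝ (fun y => α y u) x v

/-- The wedge product of a 1-form with a 2-form on a 3-dimensional space. -/
def wedge12 (α : V3 → V3 → ℝ) (β : V3 → V3 → V3 → ℝ) (x u v w : V3) : ℝ :=
  α x u * β x v w - α x v * β x u w + α x w * β x u v

lemma cramer3 (μ : AlternatingMap ℝ V3 ℝ (Fin 3)) (X u v w : V3) :
    (μ ![X,v,w]) • u - (μ ![X,u,w]) • v + (μ ![X,u,v]) • w - (μ ![u,v,w]) • X = 0 := by
  rw [μ.eq_smul_basis_det (Pi.basisFun ℝ (Fin 3))]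
  simp only [AlternatingMap.smul_apply, smul_eq_mul, Module.Basis.det_apply]
  have hdet : ∀ a b c : V3, ((Pi.basisFun ℝ (Fin 3)).toMatrix ![a,b,c]).det =
      a 0 * (b 1 * c 2) - a 0 * (b 2 * c 1) - a 1 * (b 0 * c 2) + a 1 * (b 2 * c 0)
      + a 2 * (b 0 * c 1) - a 2 * (b 1 * c 0) := by
    intro a b c
    rw [Matrix.det_fin_three]
    simp [Module.Basis.toMatrix_apply, Matrix.cons_val_zero, Matrix.cons_val_one]
    ring
  funext i
  fin_cases i <;> simp [hdet] <;> ring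

lemma key (μ : AlternatingMap ℝ V3 ℝ (Fin 3)) (α : V3 →ₗ[ℝ] ℝ) (X u v w : V3) :
    α u * μ ![X,v,w] - α v * μ ![X,u,w] + α w * μ ![X,u,v] = α X * μ ![u,v,w] := by
  have h := congrArg α (cramer3 μ X u v w)
  simp only [map_sub, map_add, map_smul, smul_eq_mul, map_zero] at h
  linarith

/-- Let `(M³,g)` be a Riemannian 3-manifold with volume form `μ`, and `X` a nowhere
vanishing rotational Beltrami field: `curl X = f X` with `f > 0`, where `curl X` is
defined by `ι_{curl X} μ = d(ι_X g)`, i.e. `dα = f ι_X μ` for `α = ι_X g`.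
Then `α ∧ dα = f · g(X,X) · μ` is a positive multiple of the volume form, i.e.
`α ∧ dα > 0`: `α` is a contact form. -/
theorem stmt5
    (g : V3 → V3 →ₗ[ℝ] V3 →ₗ[ℝ] ℝ)
    (μ : V3 → AlternatingMap ℝ V3 ℝ (Fin 3))
    (X : V3 → V3) (f : V3 → ℝ)
    (hg : ∀ x v, v ≠ 0 → 0 < g x v v)
    (hgsymm : ∀ x u v, g x u v = g x v u)
    (hμ : ∀ x, μ x ≠ 0)
    (hX : ∀ x, X x ≠ 0) (hf : ∀ x, 0 < f x)
    (hBeltrami : ∀ x u v,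
      extDer (fun y w => g y (X y) w) x u v = f x * μ x ![X x, u, v]) :
    ∀ x u v w,
      wedge12 (fun y w => g y (X y) w)
          (extDer (fun y w => g y (X y) w)) x u v w
        = (f x * g x (X x) (X x)) * μ x ![u, v, w]
      ∧ 0 < f x * g x (X x) (X x) := by
  intro x u v w
  constructor
  · unfold wedge12
    rw [hBeltrami, hBeltrami, hBeltrami]
    have h := key (μ x) (g x (X x)) (X x) u v w
    linear_combination f x * h
  · exact mul_pos (hf x) (hg x (X x) (hX x))
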